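/- Let $q$ be a positive integer and $M$ an $n \times n$ matrix with integer entries and nonzero determinant. Then the cardinality of the kernel of $M$ viewed as a map from $(\mathbb{Z}/q\mathbb{Z})^n$ to itself divides $\det M$. -/

import Mathlib

open Matrix

lemma index_eq_natAbs_det' {n : ℕ} (N : Submodule ℤ (Fin n → ℤ))
    (e : (Fin n → ℤ) ≃ₗ[ℤ] N) :
    N.toAddSubgroup.index =
      (LinearMap.det ((N.subtype).comp (e : _ →ₗ[ℤ] N))).natAbs := by
  classical
  obtain ⟨m, snf⟩ := N.smithNormalForm (Pi.basisFun ℤ (Fin n))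
  have hm : m = n := by
    have h1 : Module.finrank ℤ N = m :=
      (Module.finrank_eq_card_basis snf.bN).trans (by simp)
    have h2 : Module.finrank ℤ N = n := by
      rw [← e.finrank_eq]
      simp [Module.finrank_pi]
    omega
  subst hm
  set σ :=
    Equiv.ofBijective snf.f (Finite.injective_iff_bijective.mp snf.f.injective) with hσ
  set e2 := (snf.bM.reindex σ.symm).equiv snf.bN (Equiv.refl _) with he2
  have h3 : ∀ j, (N.subtype.comp (e2 : _ →ₗ[ℤ] N)) (snf.bM j)
      = snf.a (σ.symm j) • snf.bM j := by
    intro j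
    have h1 : (snf.bM.reindex σ.symm) (σ.symm j) = snf.bM j := by
      rw [Module.Basis.reindex_apply]; simp
    have h2 : e2 (snf.bM j) = snf.bN (σ.symm j) := by
      rw [← h1, he2]; exact (snf.bM.reindex σ.symm).equiv_apply (σ.symm j) snf.bN (Equiv.refl _)
    simp only [LinearMap.coe_comp, LinearEquiv.coe_coe, Function.comp_apply,
      Submodule.coe_subtype]
    rw [h2, snf.snf]
    congr 2
    exact σ.apply_symm_apply j
  have hmat : LinearMap.toMatrix snf.bM snf.bM (N.subtype.comp (e2 : _ →ₗ[ℤ] N))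
      = Matrix.diagonal (fun j => snf.a (σ.symm j)) := by
    ext i j
    rw [LinearMap.toMatrix_apply, h3, _root_.map_smul, Module.Basis.repr_self]
    by_cases h : i = j
    · subst h; simp
    · simp [Matrix.diagonal_apply_ne _ h, Finsupp.single_eq_of_ne' (Ne.symm h)]
  have hdet2 : LinearMap.det (N.subtype.comp (e2 : _ →ₗ[ℤ] N)) = ∏ i, snf.a i := by
    rw [← LinearMap.det_toMatrix snf.bM, hmat, Matrix.det_diagonal]
    exact Equiv.prod_comp σ.symm snf.a
  have hnat : (LinearMap.det (N.subtype.comp (e : _ →ₗ[ℤ] N))).natAbs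
      = (∏ i, snf.a i).natAbs := by
    rw [← hdet2]
    exact Int.natAbs_eq_iff_associated.mpr (LinearMap.associated_det_comp_equiv _ _ _)
  rw [hnat, snf.toAddSubgroup_index_eq_pow_mul_prod]
  simp only [Fintype.card_fin, Nat.sub_self, pow_zero, one_mul]
  rw [show (∏ i : Fin m, snf.a i).natAbs = ∏ i : Fin m, (snf.a i).natAbs from map_prod Int.natAbsHom _ _]
  exact Finset.prod_congr rfl fun i _ => by
    rw [Ideal.span_singleton_toAddSubgroup_eq_zmultiples, Int.index_zmultiples]

theorem kernel_card_dvd_det (n q : ℕ) (hq : 0 < q)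
    (M : Matrix (Fin n) (Fin n) ℤ) (hM : M.det ≠ 0) :
    (Nat.card {x : Fin n → ZMod q // (M.map (Int.cast : ℤ → ZMod q)).mulVec x = 0} : ℤ) ∣ M.det := by
  classical
  haveI : NeZero q := ⟨hq.ne'⟩
  have hφinj : Function.Injective M.mulVecLin := by
    rw [← LinearMap.ker_eq_bot, Matrix.ker_mulVecLin_eq_bot_iff]
    intro v hv
    by_contra h
    exact hM (Matrix.exists_mulVec_eq_zero_iff.mp ⟨v, h, hv⟩)
  set N : Submodule ℤ (Fin n → ℤ) := LinearMap.range M.mulVecLin with hN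
  set e : (Fin n → ℤ) ≃ₗ[ℤ] N := LinearEquiv.ofInjective M.mulVecLin hφinj with he
  have hcomp : N.subtype.comp (e : _ →ₗ[ℤ] N) = M.mulVecLin := by
    refine LinearMap.ext fun v => ?_
    simp only [LinearMap.coe_comp, LinearEquiv.coe_coe, Function.comp_apply,
      Submodule.coe_subtype, he]
    exact LinearEquiv.ofInjective_apply M.mulVecLin v
  have hindex : N.toAddSubgroup.index = M.det.natAbs := by
    rw [index_eq_natAbs_det' N e, hcomp]
    congr 1
    rw [show M.mulVecLin = Matrix.toLin' M from rfl, LinearMap.det_toLin']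
  -- the lift of a ZMod q vector
  set lift : (Fin n → ZMod q) → (Fin n → ℤ) := fun x j => ((x j).val : ℤ) with hlift
  have hcast : ∀ (x : Fin n → ZMod q) (i : Fin n),
      ((M.mulVec (lift x) i : ℤ) : ZMod q) = (M.map (Int.cast : ℤ → ZMod q)).mulVec x i := by
    intro x i
    simp only [Matrix.mulVec, dotProduct, Matrix.map_apply, hlift]
    push_cast
    simp [ZMod.natCast_val, ZMod.cast_id]
  set K0 : Submodule (ZMod q) (Fin n → ZMod q) :=
    LinearMap.ker (Matrix.mulVecLin (M.map (Int.cast : ℤ → ZMod q))) with hK0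
  have hmem : ∀ x : K0, (M.map (Int.cast : ℤ → ZMod q)).mulVec (x : Fin n → ZMod q) = 0 := by
    intro x
    have h := x.2
    simp only [hK0, LinearMap.mem_ker, Matrix.mulVecLin_apply] at h
    exact h
  have hdvd : ∀ (x : K0) (i : Fin n), (q : ℤ) ∣ M.mulVec (lift (x : Fin n → ZMod q)) i := by
    intro x i
    rw [← ZMod.intCast_zmod_eq_zero_iff_dvd, hcast, hmem x]
    rfl
  set y : K0 → (Fin n → ℤ) := fun x i => M.mulVec (lift (x : Fin n → ZMod q)) i / q with hy
  have hqy : ∀ x : K0, (q : ℤ) • y x = M.mulVec (lift (x : Fin n → ZMod q)) := by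
    intro x
    funext i
    simp only [Pi.smul_apply, smul_eq_mul, hy]
    exact Int.mul_ediv_cancel' (hdvd x i)
  have hadd : ∀ a b : K0,
      ((QuotientAddGroup.mk (y (a + b)) : (Fin n → ℤ) ⧸ N.toAddSubgroup))
        = QuotientAddGroup.mk (y a) + QuotientAddGroup.mk (y b) := by
    intro a b
    rw [← QuotientAddGroup.mk_add]
    rw [QuotientAddGroup.eq]
    set u : Fin n → ℤ := fun j =>
      (lift (a : Fin n → ZMod q) j + lift (b : Fin n → ZMod q) j
        - lift ((a + b : K0) : Fin n → ZMod q) j) / q with hu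
    have hudvd : ∀ j, (q : ℤ) ∣ (lift (a : Fin n → ZMod q) j + lift (b : Fin n → ZMod q) j
        - lift ((a + b : K0) : Fin n → ZMod q) j) := by
      intro j
      rw [← ZMod.intCast_zmod_eq_zero_iff_dvd]
      push_cast
      simp [hlift, ZMod.natCast_val, ZMod.cast_id]
    have hqu : (q : ℤ) • u = lift (a : Fin n → ZMod q) + lift (b : Fin n → ZMod q)
        - lift ((a + b : K0) : Fin n → ZMod q) := by
      funext j
      simp only [Pi.smul_apply, smul_eq_mul, hu, Pi.add_apply, Pi.sub_apply]
      exact Int.mul_ediv_cancel' (hudvd j)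
    have key : M.mulVec u = -(y (a + b)) + (y a + y b) := by
      have h1 : (q : ℤ) • M.mulVec u = (q : ℤ) • (-(y (a + b)) + (y a + y b)) := by
        rw [show M.mulVec u = M.mulVecLin u from rfl, ← _root_.map_smul, hqu]
        simp only [smul_add, smul_neg, hqy]
        rw [map_sub, map_add]
        simp only [Matrix.mulVecLin_apply]
        abel
      exact smul_right_injective (Fin n → ℤ) (by exact_mod_cast hq.ne' : (q : ℤ) ≠ 0) h1
    exact ⟨u, by rw [Matrix.mulVecLin_apply, key]⟩
  set θ : K0 →+ ((Fin n → ℤ) ⧸ N.toAddSubgroup) :=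
    AddMonoidHom.mk' (fun x => QuotientAddGroup.mk (y x)) hadd with hθ
  have hθinj : Function.Injective θ := by
    rw [injective_iff_map_eq_zero]
    intro x hx
    have hyN : y x ∈ N.toAddSubgroup := by
      rwa [hθ, AddMonoidHom.mk'_apply, QuotientAddGroup.eq_zero_iff] at hx
    obtain ⟨w, hw⟩ := hyN
    have hxw : lift (x : Fin n → ZMod q) = (q : ℤ) • w := by
      apply hφinj
      rw [show M.mulVecLin (lift (x : Fin n → ZMod q)) = M.mulVec (lift (x : Fin n → ZMod q))
        from rfl, ← hqy x, ← hw, ← _root_.map_smul]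
    have hx0 : (x : Fin n → ZMod q) = 0 := by
      funext j
      have : ((lift (x : Fin n → ZMod q) j : ℤ) : ZMod q) = (x : Fin n → ZMod q) j := by
        simp [hlift, ZMod.natCast_val, ZMod.cast_id]
      rw [← this, hxw]
      simp
    exact Subtype.ext hx0
  have hcard : Nat.card {x : Fin n → ZMod q // (M.map (Int.cast : ℤ → ZMod q)).mulVec x = 0}
      = Nat.card K0 := by
    apply Nat.card_congr
    exact Equiv.subtypeEquivRight fun x => by
      simp [hK0, LinearMap.mem_ker, Matrix.mulVecLin_apply]
  have hdvd2 : Nat.card K0 ∣ M.det.natAbs := by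
    rw [← hindex]
    exact AddSubgroup.card_dvd_of_injective θ hθinj
  rw [hcard]
  exact (Int.natCast_dvd_natCast.mpr hdvd2).trans (Int.natAbs_dvd.mpr dvd_rfl)
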